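/- For every k ≥ 1, the Cauchy polynomial j_k has the closed form j_k = Σ_{α ⊨ k} (−1)^{α(2)+α(4)+α(6)+⋯} · h(α) · ∏_i x_i^{α(i)}, the sum over all partition symbols α of k; equivalently, the coefficient of the monomial ∏_i x_i^{α(i)} in j_k equals (−1)^{α(2)+α(4)+⋯} h(α) for every partition symbol α of k, and the coefficient of every monomial not of this form is zero. -/

import Mathlib

open MvPolynomial

/-- The unique `ℚ`-linear derivation `δ` of `ℚ[x₁, x₂, …]` with `δ xₖ = k · xₖ₊₁`. -/
noncomputable def δ : Derivation ℚ (MvPolynomial ℕ ℚ) (MvPolynomial ℕ ℚ) :=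
  mkDerivation ℚ fun k => (k : MvPolynomial ℕ ℚ) * X (k + 1)

/-- The Cauchy polynomials: `j 1 = x₁` and `j (k+1) = x₁ · j k − δ (j k)`. -/
noncomputable def cauchyJ : ℕ → MvPolynomial ℕ ℚ
  | 0 => 1
  | k + 1 => X 1 * cauchyJ k - δ (cauchyJ k)

/-- The finite set of partition symbols of `k`: finitely supported functions
`α : ℕ → ℕ` with `α 0 = 0` and `∑ i, i · α i = k`. -/
noncomputable def partitionSymbols (k : ℕ) : Finset (ℕ →₀ ℕ) :=
  ((Finset.range (k + 1)).finsupp fun _ => Finset.range (k + 1)).filter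
    fun α => α 0 = 0 ∧ (α.sum fun i a => i * a) = k

/-- The Cauchy number `h(α) = k! / (∏ i, α i ! · i ^ α i)` of a partition symbol of `k`. -/
noncomputable def cauchyNumber (k : ℕ) (α : ℕ →₀ ℕ) : ℚ :=
  (k.factorial : ℚ) / (α.prod fun i a => (a.factorial : ℚ) * (i : ℚ) ^ a)

namespace CauchyAux

noncomputable abbrev e (j : ℕ) : ℕ →₀ ℕ := Finsupp.single j 1

/-- weighted degree sum -/
def ws (β : ℕ →₀ ℕ) : ℕ := β.sum fun i a => i * a

def sgn (β : ℕ →₀ ℕ) : ℚ := (-1 : ℚ) ^ (β.sum fun i a => if Even i then a else 0)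

def F : ℕ → ℕ → ℚ := fun i a => (a.factorial : ℚ) * (i : ℚ) ^ a

def D (β : ℕ →₀ ℕ) : ℚ := β.prod F

lemma cauchyNumber_eq (k : ℕ) (β : ℕ →₀ ℕ) :
    cauchyNumber k β = (k.factorial : ℚ) / D β := rfl

lemma F_zero (i : ℕ) : F i 0 = 1 := by simp [F]

lemma term_le_ws (β : ℕ →₀ ℕ) (j : ℕ) : j * β j ≤ ws β := by
  by_cases h : β j = 0
  · simp [h]
  · exact Finset.single_le_sum (f := fun i => i * β i) (fun i _ => Nat.zero_le _)
      (Finsupp.mem_support_iff.2 h)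

lemma mem_partitionSymbols {k : ℕ} {β : ℕ →₀ ℕ} :
    β ∈ partitionSymbols k ↔ β 0 = 0 ∧ ws β = k := by
  unfold partitionSymbols
  rw [Finset.mem_filter, Finset.mem_finsupp_iff]
  constructor
  · rintro ⟨-, h⟩; exact h
  · rintro ⟨h0, hs⟩
    refine ⟨⟨fun i hi => ?_, fun i _ => ?_⟩, h0, hs⟩
    · rw [Finsupp.mem_support_iff] at hi
      have := term_le_ws β i
      rw [hs] at this
      have hi1 : 1 ≤ β i := Nat.one_le_iff_ne_zero.2 hi
      exact Finset.mem_range.2 (by nlinarith)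
    · have := term_le_ws β i
      rw [hs] at this
      rcases Nat.eq_zero_or_pos i with h | h
      · subst h; simp [h0]
      · exact Finset.mem_range.2 (by nlinarith)

lemma support_subset {k : ℕ} {β : ℕ →₀ ℕ} (hβ : β ∈ partitionSymbols k) :
    β.support ⊆ Finset.range (k + 1) := by
  unfold partitionSymbols at hβ
  rw [Finset.mem_filter, Finset.mem_finsupp_iff] at hβ
  exact hβ.1.1

/- ## pointwise finsupp lemmas -/

lemma sub_add_cancel' {β : ℕ →₀ ℕ} {j : ℕ} (h : β j ≠ 0) : (β - e j) + e j = β :=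
  tsub_add_cancel_of_le (Finsupp.single_le_iff.2 (Nat.one_le_iff_ne_zero.2 h))

lemma swap_apply (β : ℕ →₀ ℕ) (i m : ℕ) :
    (β + e i - e (i+1)) m = β m + (if i = m then 1 else 0) - (if i + 1 = m then 1 else 0) := by
  simp [Finsupp.tsub_apply, Finsupp.single_apply]

lemma swap_swap_left {α : ℕ →₀ ℕ} {i : ℕ} (h : α i ≠ 0) :
    (α - e i + e (i+1)) + e i - e (i+1) = α := by
  ext m
  simp only [Finsupp.tsub_apply, Finsupp.add_apply, Finsupp.single_apply]
  rcases eq_or_ne i m with rfl | h1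
  · have : ¬ (i + 1 = i) := by omega
    simp [this]; omega
  · rcases eq_or_ne (i+1) m with rfl | h2
    · simp [h1]
    · simp [h1, h2]

lemma swap_swap_right {β : ℕ →₀ ℕ} {i : ℕ} (h : β (i+1) ≠ 0) :
    (β + e i - e (i+1)) - e i + e (i+1) = β := by
  ext m
  simp only [Finsupp.tsub_apply, Finsupp.add_apply, Finsupp.single_apply]
  rcases eq_or_ne i m with rfl | h1
  · have : ¬ (i + 1 = i) := by omega
    simp [this]
  · rcases eq_or_ne (i+1) m with rfl | h2
    · simp [h1]; omega
    · simp [h1, h2]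

/- ## ws and sgn lemmas -/

lemma ws_add (γ η : ℕ →₀ ℕ) : ws (γ + η) = ws γ + ws η := by
  unfold ws
  exact Finsupp.sum_add_index' (fun i => by simp) (fun i b c => by ring)

lemma ws_single (j : ℕ) : ws (e j) = j := by
  unfold ws; rw [Finsupp.sum_single_index] <;> simp

lemma sgn_add (γ η : ℕ →₀ ℕ) : sgn (γ + η) = sgn γ * sgn η := by
  unfold sgn
  rw [Finsupp.sum_add_index' (fun i => by simp) (fun i b c => by split <;> simp), pow_add]

lemma sgn_single (j : ℕ) : sgn (e j) = if Even j then -1 else 1 := by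
  unfold sgn; rw [Finsupp.sum_single_index (by simp)]; split <;> simp

lemma sgn_sub_one {β : ℕ →₀ ℕ} (h : β 1 ≠ 0) : sgn (β - e 1) = sgn β := by
  conv_rhs => rw [← sub_add_cancel' h]
  rw [sgn_add, sgn_single]
  norm_num

lemma ws_sub_one {β : ℕ →₀ ℕ} (h : β 1 ≠ 0) : ws (β - e 1) + 1 = ws β := by
  conv_rhs => rw [← sub_add_cancel' h]
  rw [ws_add, ws_single]

lemma add_sub_add_cancel {β : ℕ →₀ ℕ} {i : ℕ} (h : β (i+1) ≠ 0) :
    (β + e i - e (i+1)) + e (i+1) = β + e i := by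
  apply sub_add_cancel'
  rw [Finsupp.add_apply, Finsupp.single_apply, if_neg (by omega : ¬ i = i+1)]
  simpa using h

lemma sgn_swap {β : ℕ →₀ ℕ} {i : ℕ} (h : β (i+1) ≠ 0) :
    sgn (β + e i - e (i+1)) = - sgn β := by
  have key : sgn (β + e i - e (i+1)) * sgn (e (i+1)) = sgn β * sgn (e i) := by
    rw [← sgn_add, add_sub_add_cancel h, sgn_add]
  rcases Nat.even_or_odd i with hi | hi
  · have hi1 : ¬ Even (i+1) := by simp [Nat.even_add_one, hi]
    rw [sgn_single, sgn_single, if_pos hi, if_neg hi1, mul_one] at key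
    rw [key]; ring
  · have hi' : ¬ Even i := Nat.not_even_iff_odd.2 hi
    have hi1 : Even (i+1) := by simp [Nat.even_add_one, hi']
    rw [sgn_single, sgn_single, if_neg hi', if_pos hi1] at key
    have := key
    nlinarith [key]

lemma ws_swap {β : ℕ →₀ ℕ} {i : ℕ} (h : β (i+1) ≠ 0) :
    ws (β + e i - e (i+1)) + (i + 1) = ws β + i := by
  have key : ws ((β + e i - e (i+1)) + e (i+1)) = ws (β + e i) := by
    rw [add_sub_add_cancel h]
  rw [ws_add, ws_add, ws_single, ws_single] at key
  omega

lemma swap_apply_zero {β : ℕ →₀ ℕ} {i : ℕ} (hi : 1 ≤ i) (h0 : β 0 = 0) :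
    (β + e i - e (i+1)) 0 = 0 := by
  rw [swap_apply, if_neg (by omega), if_neg (by omega), h0]

lemma swap_apply_self {β : ℕ →₀ ℕ} (i : ℕ) :
    (β + e i - e (i+1)) i = β i + 1 := by
  rw [swap_apply, if_pos rfl, if_neg (by omega)]
  omega

/- ## D lemmas -/

lemma D_ne_zero {β : ℕ →₀ ℕ} (h0 : β 0 = 0) : D β ≠ 0 := by
  unfold D Finsupp.prod
  rw [Finset.prod_ne_zero_iff]
  intro i hi
  have : i ≠ 0 := fun h => by
    subst h; exact (Finsupp.mem_support_iff.1 hi) h0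
  have : (i : ℚ) ≠ 0 := Nat.cast_ne_zero.2 this
  simp [F, this, Nat.factorial_ne_zero]

lemma D_eq_prod {β : ℕ →₀ ℕ} {s : Finset ℕ} (hs : β.support ⊆ s) :
    D β = ∏ i ∈ s, F i (β i) :=
  Finsupp.prod_of_support_subset β hs F (fun i _ => F_zero i)

lemma D_sub_one {β : ℕ →₀ ℕ} (h1 : β 1 ≠ 0) : D β = (β 1 : ℚ) * D (β - e 1) := by
  have h1m : 1 ∈ β.support := Finsupp.mem_support_iff.2 h1
  have hsub : (β - e 1).support ⊆ β.support := Finsupp.support_tsub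
  rw [D_eq_prod (subset_refl _), D_eq_prod hsub,
    ← Finset.mul_prod_erase _ _ h1m, ← Finset.mul_prod_erase _ _ h1m]
  have hrest : ∀ m ∈ β.support.erase 1, F m ((β - e 1) m) = F m (β m) := by
    intro m hm
    have : m ≠ 1 := Finset.ne_of_mem_erase hm
    rw [Finsupp.tsub_apply, Finsupp.single_apply, if_neg (by omega)]
    simp
  rw [Finset.prod_congr rfl hrest, ← mul_assoc]
  congr 1
  have : (β - e 1) 1 = β 1 - 1 := by
    rw [Finsupp.tsub_apply, Finsupp.single_apply, if_pos rfl]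
  rw [this]
  obtain ⟨n, hn⟩ : ∃ n, β 1 = n + 1 := ⟨β 1 - 1, by omega⟩
  simp [hn, F, Nat.factorial_succ]

lemma D_swap {β : ℕ →₀ ℕ} {i : ℕ} (hi : 1 ≤ i) (h : β (i+1) ≠ 0) :
    ((i : ℚ) * ((β i : ℚ) + 1)) * D β
      = (((i : ℚ) + 1) * (β (i+1) : ℚ)) * D (β + e i - e (i+1)) := by
  set α := β + e i - e (i+1) with hα
  have hαap : ∀ m, α m = β m + (if i = m then 1 else 0) - (if i + 1 = m then 1 else 0) :=
    fun m => swap_apply β i m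
  have hαi : α i = β i + 1 := by rw [hαap]; simp [(by omega : ¬ i + 1 = i)]
  have hαi1 : α (i+1) = β (i+1) - 1 := by rw [hαap]; simp [(by omega : ¬ i = i + 1)]
  set s : Finset ℕ := β.support ∪ {i, i+1} with hs
  have hsb : β.support ⊆ s := Finset.subset_union_left
  have hsa : α.support ⊆ s := by
    intro m hm
    rw [Finsupp.mem_support_iff] at hm
    rw [hαap] at hm
    by_cases hmb : β m = 0
    · simp only [hmb] at hm
      have : i = m := by by_contra hne; simp [hne] at hm
      subst this
      exact Finset.mem_union_right _ (by simp)
    · exact hsb (Finsupp.mem_support_iff.2 hmb)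
  have hi_s : i ∈ s := Finset.mem_union_right _ (by simp)
  have hi1_s : i + 1 ∈ s.erase i :=
    Finset.mem_erase.2 ⟨by omega, Finset.mem_union_right _ (by simp)⟩
  rw [D_eq_prod hsb, D_eq_prod hsa,
    ← Finset.mul_prod_erase _ _ hi_s, ← Finset.mul_prod_erase _ _ hi1_s,
    ← Finset.mul_prod_erase _ (fun m => F m (α m)) hi_s,
    ← Finset.mul_prod_erase _ _ hi1_s]
  have hrest : ∀ m ∈ (s.erase i).erase (i+1), F m (α m) = F m (β m) := by
    intro m hm
    have h2 : m ≠ i + 1 := Finset.ne_of_mem_erase hm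
    have h1 : m ≠ i := Finset.ne_of_mem_erase (Finset.mem_of_mem_erase hm)
    rw [hαap, if_neg (by omega), if_neg (by omega)]
    simp
  rw [Finset.prod_congr rfl hrest, hαi, hαi1]
  obtain ⟨m, hm⟩ : ∃ m, β (i+1) = m + 1 := ⟨β (i+1) - 1, by omega⟩
  simp only [hm, Nat.add_sub_cancel]
  simp only [F, Nat.factorial_succ]
  push_cast
  ring

/- ## polynomial lemmas -/

lemma delta_monomial (α : ℕ →₀ ℕ) (r : ℚ) :
    δ (monomial α r) =
      ∑ i ∈ α.support, monomial (α - e i + e (i+1)) (r * (i * α i)) := by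
  rw [δ, mkDerivation_monomial]
  rw [Finsupp.sum]
  rw [Finset.smul_sum]
  refine Finset.sum_congr rfl fun i hi => ?_
  have h1 : (i : MvPolynomial ℕ ℚ) = C (i : ℚ) := by simp
  have h2 : X (R := ℚ) (i+1) = monomial (e (i+1)) 1 := rfl
  rw [h1, h2, C_mul_monomial, smul_eq_mul, monomial_mul, smul_monomial]
  rw [smul_eq_mul]
  ring_nf

lemma coeff_sum_monomials (s : Finset (ℕ →₀ ℕ)) (v : (ℕ →₀ ℕ) → ℚ) (β : ℕ →₀ ℕ) :
    coeff β (∑ α ∈ s, monomial α (v α)) = if β ∈ s then v β else 0 := by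
  classical
  rw [coeff_sum]
  simp only [coeff_monomial]
  exact Finset.sum_ite_eq' s β v

/- ## key nat identity -/

lemma ws_eq_range_sum (β : ℕ →₀ ℕ) (n : ℕ) (h : β.support ⊆ Finset.range n) :
    ws β = ∑ j ∈ Finset.range n, j * β j :=
  Finsupp.sum_of_support_subset β h _ (fun i _ => by simp)

lemma key_nat_identity (k : ℕ) (β : ℕ →₀ ℕ) (h0 : β 0 = 0) (hs : ws β = k + 1) :
    β 1 + ∑ i ∈ Finset.range (k+1), (if i = 0 then 0 else (i+1) * β (i+1)) = k + 1 := by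
  have hsupp : β.support ⊆ Finset.range (k + 3) := by
    intro j hj
    rw [Finsupp.mem_support_iff] at hj
    have := term_le_ws β j
    rw [hs] at this
    have : j ≤ k + 1 := by nlinarith [Nat.one_le_iff_ne_zero.2 hj]
    exact Finset.mem_range.2 (by omega)
  have htop : β (k + 2) = 0 := by
    by_contra h
    have := term_le_ws β (k+2)
    rw [hs] at this
    nlinarith [Nat.one_le_iff_ne_zero.2 h]
  have h1 : k + 1 = ∑ j ∈ Finset.range (k+3), j * β j := by
    rw [← hs, ws_eq_range_sum β _ hsupp]
  rw [Finset.sum_range_succ'] at h1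
  rw [Finset.sum_range_succ'] at h1
  rw [Finset.sum_range_succ']
  have hcong : ∑ i ∈ Finset.range k, (if i + 1 = 0 then 0 else (i+1+1) * β (i+1+1))
      = ∑ i ∈ Finset.range k, (i+1+1) * β (i+1+1) :=
    Finset.sum_congr rfl fun i _ => by simp
  rw [hcong]
  rw [Finset.sum_range_succ] at h1
  simp only [htop] at h1
  norm_num at h1 ⊢
  omega

/- ## partitionSymbols 1 -/

lemma partitionSymbols_one : partitionSymbols 1 = {Finsupp.single 1 1} := by
  ext β
  rw [mem_partitionSymbols, Finset.mem_singleton]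
  constructor
  · rintro ⟨h0, hs⟩
    ext m
    have hm := term_le_ws β m
    rw [hs] at hm
    rw [Finsupp.single_apply]
    rcases eq_or_ne m 1 with rfl | hne
    · have h1 : β 1 ≤ 1 := by omega
      have h2 : 1 ≤ β 1 := by
        by_contra h
        have hβ1 : β 1 = 0 := by omega
        have : ws β ≠ 1 := by
          unfold ws Finsupp.sum
          intro hcontra
          obtain ⟨j, hj, hjval⟩ : ∃ j ∈ β.support, j * β j ≠ 0 := by
            by_contra hall
            push_neg at hall
            have : ∑ j ∈ β.support, j * β j = 0 := Finset.sum_eq_zero hall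
            rw [this] at hcontra; omega
          rw [Finsupp.mem_support_iff] at hj
          have hj0 : j ≠ 0 := fun h => by subst h; simp at hjval
          have hj1 : j ≠ 1 := fun h => by subst h; exact hj hβ1
          have : j * β j ≤ 1 := hs ▸ term_le_ws β j
          have : 1 ≤ β j := Nat.one_le_iff_ne_zero.2 hj
          have hj2 : 2 ≤ j := by omega
          nlinarith
        exact this hs
      simp; omega
    · simp only [if_neg (show ¬(1:ℕ) = m by omega)]
      rcases eq_or_ne m 0 with rfl | hm0
      · exact h0
      · by_contra h
        have : 2 ≤ m := by omega
        nlinarith [Nat.one_le_iff_ne_zero.2 h]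
  · rintro rfl
    constructor
    · simp
    · unfold ws; rw [Finsupp.sum_single_index] <;> simp

/- ## the closed-form sum -/

noncomputable def S (k : ℕ) : MvPolynomial ℕ ℚ :=
  ∑ α ∈ partitionSymbols k,
    monomial α
      ((-1 : ℚ) ^ (α.sum fun i a => if Even i then a else 0) * cauchyNumber k α)

lemma S_def (k : ℕ) :
    S k = ∑ α ∈ partitionSymbols k, monomial α (sgn α * cauchyNumber k α) := rfl

lemma coeff_S (k : ℕ) (β : ℕ →₀ ℕ) :
    coeff β (S k) = if β ∈ partitionSymbols k then sgn β * cauchyNumber k β else 0 := by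
  rw [S_def, coeff_sum_monomials]

lemma S_one : S 1 = X 1 := by
  rw [S_def, partitionSymbols_one, Finset.sum_singleton]
  have h1 : sgn (Finsupp.single 1 1) = 1 := by
    rw [show (Finsupp.single 1 1 : ℕ →₀ ℕ) = e 1 from rfl, sgn_single]
    norm_num
  have h2 : cauchyNumber 1 (Finsupp.single 1 1) = 1 := by
    rw [cauchyNumber_eq]
    have : D (Finsupp.single 1 1) = 1 := by
      unfold D
      rw [Finsupp.prod_single_index (F_zero 1)]
      simp [F]
    rw [this]
    simp
  rw [h1, h2]
  simp [X]

/- ## more helpers for the inner sum -/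

lemma unswap_apply_succ (α : ℕ →₀ ℕ) (i : ℕ) :
    (α - e i + e (i+1)) (i+1) = α (i+1) + 1 := by
  rw [Finsupp.add_apply, Finsupp.tsub_apply, Finsupp.single_apply,
    if_neg (by omega : ¬ i = i + 1), Finsupp.single_apply, if_pos rfl]
  omega

lemma unswap_apply_zero {α : ℕ →₀ ℕ} {i : ℕ} (hi : 1 ≤ i) (h0 : α 0 = 0) :
    (α - e i + e (i+1)) 0 = 0 := by
  rw [Finsupp.add_apply, Finsupp.tsub_apply, Finsupp.single_apply,
    if_neg (by omega : ¬ i = 0), Finsupp.single_apply, if_neg (by omega : ¬ i + 1 = 0), h0]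
  omega

lemma ws_unswap {α : ℕ →₀ ℕ} {i : ℕ} (h : α i ≠ 0) :
    ws (α - e i + e (i+1)) = ws α + 1 := by
  have h1 : (α - e i + e (i+1)) (i+1) ≠ 0 := by
    rw [unswap_apply_succ]; omega
  have h2 := ws_swap h1
  rw [swap_swap_left h] at h2
  omega

/- ## the inner sum -/

lemma inner_sum (k i : ℕ) (β : ℕ →₀ ℕ) :
    (∑ α ∈ partitionSymbols k,
      if (α - e i + e (i+1)) = β then (sgn α * cauchyNumber k α) * (i * α i) else 0)
    = if 1 ≤ i ∧ β (i+1) ≠ 0 ∧ β 0 = 0 ∧ ws β = k + 1 then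
        (sgn (β + e i - e (i+1)) * cauchyNumber k (β + e i - e (i+1)))
          * (i * ((β i : ℚ) + 1))
      else 0 := by
  classical
  by_cases H : 1 ≤ i ∧ β (i+1) ≠ 0 ∧ β 0 = 0 ∧ ws β = k + 1
  · obtain ⟨hi, hb, h0, hws⟩ := H
    rw [if_pos ⟨hi, hb, h0, hws⟩]
    have hmem : β + e i - e (i+1) ∈ partitionSymbols k := by
      refine mem_partitionSymbols.2 ⟨swap_apply_zero hi h0, ?_⟩
      have := ws_swap hb
      omega
    rw [Finset.sum_eq_single_of_mem _ hmem]
    · rw [if_pos (swap_swap_right hb), swap_apply_self]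
      push_cast
      ring
    · intro α hα hne
      split_ifs with hc
      · rcases Nat.eq_zero_or_pos (α i) with hz | hpos
        · rw [hz]; simp
        · exfalso
          apply hne
          rw [← hc, swap_swap_left (by omega : α i ≠ 0)]
      · rfl
  · rw [if_neg H]
    apply Finset.sum_eq_zero
    intro α hα
    split_ifs with hc
    swap
    · rfl
    rcases Nat.eq_zero_or_pos i with hi0 | hi1
    · rw [hi0]; simp
    rcases Nat.eq_zero_or_pos (α i) with hz | hpos
    · rw [hz]; simp
    exfalso
    apply H
    obtain ⟨hα0, hαws⟩ := mem_partitionSymbols.1 hα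
    refine ⟨hi1, ?_, ?_, ?_⟩
    · rw [← hc, unswap_apply_succ]; omega
    · rw [← hc]; exact unswap_apply_zero hi1 hα0
    · rw [← hc, ws_unswap (by omega : α i ≠ 0), hαws]

/- ## the main step -/

lemma main_step (k : ℕ) : X 1 * S k - δ (S k) = S (k + 1) := by
  classical
  apply MvPolynomial.ext
  intro β
  have hδ : δ (S k) = ∑ α ∈ partitionSymbols k, ∑ i ∈ Finset.range (k+1),
      monomial (α - e i + e (i+1)) ((sgn α * cauchyNumber k α) * (i * α i)) := by
    rw [S_def, map_sum]
    refine Finset.sum_congr rfl fun α hα => ?_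
    rw [delta_monomial]
    apply Finset.sum_subset (support_subset hα)
    intro i _ hi
    rw [Finsupp.notMem_support_iff] at hi
    rw [hi]
    simp
  rw [coeff_sub, hδ, coeff_X_mul', coeff_S, coeff_S]
  simp only [coeff_sum, coeff_monomial]
  rw [Finset.sum_comm]
  rw [Finset.sum_congr rfl (fun i (_ : i ∈ Finset.range (k+1)) => inner_sum k i β)]
  by_cases hP : β 0 = 0 ∧ ws β = k + 1
  · obtain ⟨h0, hws⟩ := hP
    rw [if_pos (mem_partitionSymbols.2 ⟨h0, hws⟩)]
    have hD : D β ≠ 0 := D_ne_zero h0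
    have t1 : (if 1 ∈ β.support then
          (if β - Finsupp.single 1 1 ∈ partitionSymbols k then
            sgn (β - Finsupp.single 1 1) * cauchyNumber k (β - Finsupp.single 1 1) else 0)
        else 0) = sgn β * ((k.factorial : ℚ) * (β 1 : ℚ)) / D β := by
      by_cases hb1 : β 1 = 0
      · rw [if_neg (by simp [Finsupp.mem_support_iff, hb1])]
        rw [hb1]
        norm_num
      · have hz : (β - e 1) 0 = 0 := by
          rw [Finsupp.tsub_apply, h0]
          simp
        have hmem : β - e 1 ∈ partitionSymbols k := by
          refine mem_partitionSymbols.2 ⟨hz, ?_⟩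
          have := ws_sub_one hb1
          omega
        rw [if_pos (Finsupp.mem_support_iff.2 hb1), if_pos hmem]
        rw [sgn_sub_one hb1, cauchyNumber_eq, D_sub_one hb1]
        have hD' : D (β - e 1) ≠ 0 := D_ne_zero hz
        have hb1Q : (β 1 : ℚ) ≠ 0 := Nat.cast_ne_zero.2 hb1
        field_simp
    rw [t1]
    have t2 : ∀ i ∈ Finset.range (k+1),
        (if 1 ≤ i ∧ β (i+1) ≠ 0 ∧ β 0 = 0 ∧ ws β = k + 1 then
          (sgn (β + e i - e (i+1)) * cauchyNumber k (β + e i - e (i+1)))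
            * (i * ((β i : ℚ) + 1))
        else 0)
        = -(sgn β * (k.factorial : ℚ) / D β)
            * ((if i = 0 then 0 else (i+1) * β (i+1) : ℕ) : ℚ) := by
      intro i _
      by_cases hi0 : i = 0
      · subst hi0
        rw [if_neg (by rintro ⟨h, -⟩; omega), if_pos rfl]
        simp
      · by_cases hb : β (i+1) = 0
        · rw [if_neg (by rintro ⟨-, h, -⟩; exact h hb), if_neg hi0, hb]
          push_cast
          ring
        · have hi1 : 1 ≤ i := by omega
          rw [if_pos ⟨hi1, hb, h0, hws⟩, if_neg hi0]
          have hDs : D (β + e i - e (i+1)) ≠ 0 := D_ne_zero (swap_apply_zero hi1 h0)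
          rw [sgn_swap hb, cauchyNumber_eq]
          have hD2 := D_swap hi1 hb
          field_simp
          push_cast
          linear_combination (-sgn β) * hD2
    rw [Finset.sum_congr rfl t2, ← Finset.mul_sum, ← Nat.cast_sum]
    have hkey := key_nat_identity k β h0 hws
    have hkeyQ : ((∑ i ∈ Finset.range (k+1),
        if i = 0 then 0 else (i+1) * β (i+1) : ℕ) : ℚ) = ((k : ℚ) + 1) - (β 1 : ℚ) := by
      have hc := congrArg (Nat.cast (R := ℚ)) hkey
      push_cast at hc ⊢
      linarith
    rw [hkeyQ, cauchyNumber_eq, Nat.factorial_succ]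
    push_cast
    field_simp
    ring
  · rw [if_neg (fun hm => hP (mem_partitionSymbols.1 hm))]
    have t1 : (if 1 ∈ β.support then
          (if β - Finsupp.single 1 1 ∈ partitionSymbols k then
            sgn (β - Finsupp.single 1 1) * cauchyNumber k (β - Finsupp.single 1 1) else 0)
        else 0) = 0 := by
      split_ifs with h1 h2
      · exfalso
        apply hP
        obtain ⟨hz, hw⟩ := mem_partitionSymbols.1 h2
        have hb1 : β 1 ≠ 0 := Finsupp.mem_support_iff.1 h1
        constructor
        · have hcan := sub_add_cancel' hb1
          conv_lhs => rw [← hcan]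
          rw [Finsupp.add_apply, hz, Finsupp.single_apply]
          norm_num
        · rw [← ws_sub_one hb1, hw]
      · rfl
      · rfl
    have t2 : (∑ i ∈ Finset.range (k+1),
        if 1 ≤ i ∧ β (i+1) ≠ 0 ∧ β 0 = 0 ∧ ws β = k + 1 then
          (sgn (β + e i - e (i+1)) * cauchyNumber k (β + e i - e (i+1)))
            * (i * ((β i : ℚ) + 1))
        else 0) = 0 := by
      apply Finset.sum_eq_zero
      intro i _
      rw [if_neg]
      rintro ⟨-, -, h3, h4⟩
      exact hP ⟨h3, h4⟩
    rw [t1, t2]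
    ring

lemma cauchyJ_eq_S (k : ℕ) (hk : 1 ≤ k) : cauchyJ k = S k := by
  induction k, hk using Nat.le_induction with
  | base => rw [show cauchyJ 1 = X 1 * cauchyJ 0 - δ (cauchyJ 0) from rfl]
            rw [show cauchyJ 0 = 1 from rfl]
            rw [S_one]
            simp
  | succ k hk ih =>
      rw [show cauchyJ (k+1) = X 1 * cauchyJ k - δ (cauchyJ k) from rfl, ih, main_step]

end CauchyAux

theorem cauchyJ_eq_sum_partitionSymbols (k : ℕ) (hk : 1 ≤ k) :
    cauchyJ k =
      ∑ α ∈ partitionSymbols k,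
        monomial α
          ((-1 : ℚ) ^ (α.sum fun i a => if Even i then a else 0) * cauchyNumber k α) := by
  exact CauchyAux.cauchyJ_eq_S k hk
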